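/- If 1/3 < p < 1/2, then b_n + c_n ≤ (3/5)^{n-2} for all n ≥ 2; if 0 < p ≤ 1/3, then b_n + c_n ≤ (4/5)^{n-2} for all n ≥ 2. -/

import Mathlib

set_option maxHeartbeats 1600000 in
lemma aux_stmt12 (p r : ℝ) (hp : 0 < p) (hp' : p < 1/2)
    (hr : (r = 3/5 ∧ 1/3 ≤ p) ∨ r = 4/5)
    (b c d : ℕ → ℝ)
    (hb2 : b 2 = (1 - p) / (5 - 7*p))
    (hc2 : c 2 = (1 - 2*p) / (5 - 7*p))
    (hd : ∀ n, 2 ≤ n → d n = c n*(2-p)*p + (c n)^2*(1-2*p) + (b n)^2*p*(2-3*p)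
        + b n*p*(3-4*p) + b n * c n*(2-6*p+6*p^2))
    (hbrec : ∀ n, 2 ≤ n → b (n+1) = p*(b n * c n*(2-3*p) + (b n)^2*(1-p) + (c n)^2*p) / d n)
    (hcrec : ∀ n, 2 ≤ n → c (n+1) = p*(b n * c n + (c n)^2*(1-p) + (b n)^2*(1-2*p)) / d n) :
    ∀ n, 2 ≤ n → 0 < c n ∧ c n ≤ b n ∧ b n + c n ≤ r^(n-2) := by
  have h2 : (0:ℝ) < 1 - 2*p := by linarith
  have h57 : (0:ℝ) < 5 - 7*p := by linarith
  have hrpos : (0:ℝ) < r := by rcases hr with ⟨h, _⟩ | h <;> rw [h] <;> norm_num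
  intro n hn
  induction n, hn using Nat.le_induction with
  | base =>
    refine ⟨by rw [hc2]; positivity, ?_, ?_⟩
    · rw [hb2, hc2, div_le_div_iff₀ h57 h57]; nlinarith
    · have : (2:ℕ) - 2 = 0 := rfl
      rw [this, pow_zero, hb2, hc2, ← add_div, div_le_one h57]; linarith
  | succ n hn ih =>
    obtain ⟨hc, hcb, hsum⟩ := ih
    have hb : 0 < b n := lt_of_lt_of_le hc hcb
    have hd' := hd n hn
    have hbr := hbrec n hn
    have hcr := hcrec n hn
    set B := b n with hB
    set C := c n with hC
    have t1 : 0 < C*(2-p)*p := mul_pos (mul_pos hc (by linarith)) hp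
    have t2 : 0 ≤ C^2*(1-2*p) := mul_nonneg (sq_nonneg C) h2.le
    have t3 : 0 ≤ B^2*p*(2-3*p) :=
      mul_nonneg (mul_nonneg (sq_nonneg B) hp.le) (by linarith)
    have t4 : 0 < B*p*(3-4*p) := mul_pos (mul_pos hb hp) (by linarith)
    have t5 : 0 ≤ B*C*(2-6*p+6*p^2) :=
      mul_nonneg (mul_nonneg hb.le hc.le) (by nlinarith [sq_nonneg (2*p-1)])
    have hdpos : 0 < d n := by rw [hd']; linarith
    have hc' : 0 < c (n+1) := by
      rw [hcr]
      apply div_pos _ hdpos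
      have u1 : 0 < B*C := mul_pos hb hc
      have u2 : 0 ≤ C^2*(1-p) := mul_nonneg (sq_nonneg C) (by linarith)
      have u3 : 0 ≤ B^2*(1-2*p) := mul_nonneg (sq_nonneg B) h2.le
      have : 0 < B*C + C^2*(1-p) + B^2*(1-2*p) := by linarith
      exact mul_pos hp this
    have hcb' : c (n+1) ≤ b (n+1) := by
      rw [hbr, hcr, div_le_div_iff_of_pos_right hdpos]
      nlinarith [mul_nonneg (mul_nonneg hp.le (sub_nonneg.2 hcb))
        (show (0:ℝ) ≤ p*B + (1-2*p)*C by
          have := mul_nonneg h2.le hc.le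
          have := mul_nonneg hp.le hb.le
          nlinarith)]
    refine ⟨hc', hcb', ?_⟩
    have hBC : (0:ℝ) ≤ B + C := by linarith
    have hstep : b (n+1) + c (n+1) ≤ r * (B + C) := by
      rw [hbr, hcr, ← add_div, div_le_iff₀ hdpos, hd']
      have hL : p*(C*(2-p) + B*(3-4*p)) ≤ C*(2-p)*p + C^2*(1-2*p) + B^2*p*(2-3*p)
          + B*p*(3-4*p) + B*C*(2-6*p+6*p^2) := by nlinarith [t2, t3, t5]
      have h1 : p*(B*C*(2-3*p) + B^2*(1-p) + C^2*p) + p*(B*C + C^2*(1-p) + B^2*(1-2*p))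
          ≤ r*(B+C) * (p*(C*(2-p) + B*(3-4*p))) := by
        rcases hr with ⟨h, h3⟩ | h <;> rw [h]
        · nlinarith [mul_nonneg (mul_nonneg hp.le (show (0:ℝ) ≤ 3*p - 1 by linarith))
            (mul_nonneg (sub_nonneg.2 hcb) hBC)]
        · nlinarith [mul_nonneg (mul_nonneg hp.le (show (0:ℝ) ≤ 2-p by linarith)) (sq_nonneg B),
            mul_nonneg (mul_nonneg (mul_nonneg hp.le (show (0:ℝ) ≤ 1-p by linarith)) hb.le) hc.le,
            mul_nonneg (mul_nonneg hp.le (show (0:ℝ) ≤ 3-4*p by linarith)) (sq_nonneg C)]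
      calc p*(B*C*(2-3*p) + B^2*(1-p) + C^2*p) + p*(B*C + C^2*(1-p) + B^2*(1-2*p))
          ≤ r*(B+C) * (p*(C*(2-p) + B*(3-4*p))) := h1
        _ ≤ r*(B+C) * (C*(2-p)*p + C^2*(1-2*p) + B^2*p*(2-3*p)
            + B*p*(3-4*p) + B*C*(2-6*p+6*p^2)) :=
            mul_le_mul_of_nonneg_left hL (mul_nonneg hrpos.le hBC)
    have hn2 : n + 1 - 2 = (n - 2) + 1 := by omega
    rw [hn2, pow_succ]
    calc b (n+1) + c (n+1) ≤ r * (B + C) := hstep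
      _ ≤ r * r^(n-2) := mul_le_mul_of_nonneg_left hsum hrpos.le
      _ = r^(n-2) * r := mul_comm _ _

theorem stmt_12 (p : ℝ) (hp : 0 < p) (hp' : p < 1/2)
(b c d : ℕ → ℝ)
    (hb2 : b 2 = (1 - p) / (5 - 7*p))
    (hc2 : c 2 = (1 - 2*p) / (5 - 7*p))
    (hd : ∀ n, 2 ≤ n → d n = c n*(2-p)*p + (c n)^2*(1-2*p) + (b n)^2*p*(2-3*p)
        + b n*p*(3-4*p) + b n * c n*(2-6*p+6*p^2))
    (hbrec : ∀ n, 2 ≤ n → b (n+1) = p*(b n * c n*(2-3*p) + (b n)^2*(1-p) + (c n)^2*p) / d n)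
    (hcrec : ∀ n, 2 ≤ n → c (n+1) = p*(b n * c n + (c n)^2*(1-p) + (b n)^2*(1-2*p)) / d n) :
    (1/3 < p → ∀ n, 2 ≤ n → b n + c n ≤ (3/5 : ℝ)^(n - 2)) ∧
    (p ≤ 1/3 → ∀ n, 2 ≤ n → b n + c n ≤ (4/5 : ℝ)^(n - 2)) := by
  constructor
  · intro h3 n hn
    exact (aux_stmt12 p (3/5) hp hp' (Or.inl ⟨rfl, h3.le⟩) b c d hb2 hc2 hd hbrec hcrec n hn).2.2
  · intro _ n hn
    exact (aux_stmt12 p (4/5) hp hp' (Or.inr rfl) b c d hb2 hc2 hd hbrec hcrec n hn).2.2
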